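/- Fix L ≥ 1, probabilities p_1,…,p_L and a mean μ > 0 with κ > L+1, and let G = G(p_L). If z̃_G ≤ e^{−2/(L+1)}, then g_{G_m}(z̃_m) converges to g_G(z̃_G^{(μ)}) as m → ∞; consequently, the infimum over F ∈ F(μ,p_L) of the giant-component size ξ_F equals 1 − g_G(z̃_G^{(μ)}). -/

import Mathlib

open scoped BigOperators

/-- A degree distribution: a sequence of nonnegative probabilities on the positive
integers summing to one, with finite mean and `p 2 ≠ 1`. -/
structure DegreeDist where
  p : ℕ → ℝ
  nonneg : ∀ d, 0 ≤ p d
  zero : p 0 = 0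
  psummable : Summable p
  sum_one : ∑' d : ℕ, p d = 1
  mean_summable : Summable fun d : ℕ => (d : ℝ) * p d
  two_ne_one : p 2 ≠ 1

/-- The mean `μ_F` of a degree distribution. -/
noncomputable def mu (F : DegreeDist) : ℝ := ∑' d : ℕ, (d : ℝ) * F.p d

/-- The probability generating function `g_F`. -/
noncomputable def pgf (F : DegreeDist) (s : ℝ) : ℝ := ∑' d : ℕ, F.p d * s ^ d

/-- The derivative `g_F'` of the probability generating function. -/
noncomputable def pgfD (F : DegreeDist) (s : ℝ) : ℝ := ∑' d : ℕ, (d : ℝ) * F.p d * s ^ (d - 1)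

/-- `z` is the smallest `s ∈ [0,1]` with `m * s = g_F'(s)`.  Taking `m = mu F` gives `z̃_F`;
taking `m = μ` gives `z̃_F^{(μ)}`. -/
def IsSmallestRoot (F : DegreeDist) (m z : ℝ) : Prop :=
  z ∈ Set.Icc (0 : ℝ) 1 ∧ m * z = pgfD F z ∧
    ∀ s ∈ Set.Icc (0 : ℝ) 1, m * s = pgfD F s → z ≤ s

/-- Membership in the class `F(p_L)`: the first `L` probabilities agree with `p`. -/
def MemF (L : ℕ) (p : ℕ → ℝ) (F : DegreeDist) : Prop :=
  ∀ d, 1 ≤ d → d ≤ L → F.p d = p d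

/-- The remaining mass `p_{>L} = 1 - ∑_{i=1}^L p_i`. -/
noncomputable def pGt (L : ℕ) (p : ℕ → ℝ) : ℝ := 1 - ∑ i ∈ Finset.Icc 1 L, p i

/-- The distribution `G = G(p_L)`: all remaining mass at `L+1`. -/
def IsG (L : ℕ) (p : ℕ → ℝ) (G : DegreeDist) : Prop :=
  (∀ d, 1 ≤ d → d ≤ L → G.p d = p d) ∧
  G.p (L + 1) = pGt L p ∧
  ∀ d, L + 1 < d → G.p d = 0

/-- `κ = (μ - ∑_{d=1}^L d p_d) / p_{>L}`. -/
noncomputable def kappa (L : ℕ) (p : ℕ → ℝ) (μ : ℝ) : ℝ :=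
  (μ - ∑ d ∈ Finset.Icc 1 L, (d : ℝ) * p d) / pGt L p

/-- `r_m = (κ - (L+1)) / (m - (L+1))`. -/
noncomputable def rmass (L : ℕ) (κ : ℝ) (m : ℕ) : ℝ :=
  (κ - ((L : ℝ) + 1)) / ((m : ℝ) - ((L : ℝ) + 1))

/-- The distribution `G_m`: mass `(1-r_m) p_{>L}` at `L+1` and `r_m p_{>L}` at `m`. -/
def IsGm (L : ℕ) (p : ℕ → ℝ) (μ : ℝ) (m : ℕ) (Gm : DegreeDist) : Prop :=
  (∀ d, 1 ≤ d → d ≤ L → Gm.p d = p d) ∧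
  Gm.p (L + 1) = (1 - rmass L (kappa L p μ) m) * pGt L p ∧
  Gm.p m = rmass L (kappa L p μ) m * pGt L p ∧
  ∀ d, L + 1 < d → d ≠ m → Gm.p d = 0

/-- The distribution `H = H(μ, p_L)`: remaining mass at `⌊κ⌋` and `⌊κ⌋+1`, preserving mean `μ`. -/
def IsH (L : ℕ) (p : ℕ → ℝ) (μ : ℝ) (H : DegreeDist) : Prop :=
  (∀ d, 1 ≤ d → d ≤ L → H.p d = p d) ∧
  H.p ⌊kappa L p μ⌋₊ = ((⌊kappa L p μ⌋₊ : ℝ) + 1 - kappa L p μ) * pGt L p ∧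
  H.p (⌊kappa L p μ⌋₊ + 1) = (kappa L p μ - (⌊kappa L p μ⌋₊ : ℝ)) * pGt L p ∧
  ∀ d, L < d → d ≠ ⌊kappa L p μ⌋₊ → d ≠ ⌊kappa L p μ⌋₊ + 1 → H.p d = 0

section Aux
open Filter

lemma summable_pgfD (F : DegreeDist) {s : ℝ} (hs : |s| ≤ 1) :
    Summable fun d : ℕ => (d : ℝ) * F.p d * s ^ (d - 1) := by
  apply Summable.of_abs
  apply Summable.of_nonneg_of_le (fun d => abs_nonneg _) _ F.mean_summable
  intro d
  rw [abs_mul, abs_mul, abs_pow]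
  have h1 : |s| ^ (d - 1) ≤ 1 := pow_le_one₀ (abs_nonneg s) hs
  have h2 : (0:ℝ) ≤ |(d:ℝ)| * |F.p d| := by positivity
  calc |(d:ℝ)| * |F.p d| * |s| ^ (d-1) ≤ |(d:ℝ)| * |F.p d| * 1 := by
        exact mul_le_mul_of_nonneg_left h1 h2
    _ = (d:ℝ) * F.p d := by
        rw [mul_one, abs_of_nonneg (by positivity : (0:ℝ) ≤ (d:ℝ)),
          abs_of_nonneg (F.nonneg d)]

lemma summable_pgf (F : DegreeDist) {s : ℝ} (hs : |s| ≤ 1) :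
    Summable fun d : ℕ => F.p d * s ^ d := by
  apply Summable.of_abs
  apply Summable.of_nonneg_of_le (fun d => abs_nonneg _) _ F.psummable
  intro d
  rw [abs_mul, abs_pow]
  have h1 : |s| ^ d ≤ 1 := pow_le_one₀ (abs_nonneg s) hs
  calc |F.p d| * |s| ^ d ≤ |F.p d| * 1 := by
        exact mul_le_mul_of_nonneg_left h1 (abs_nonneg _)
    _ = F.p d := by rw [mul_one, abs_of_nonneg (F.nonneg d)]

lemma pgfD_nonneg (F : DegreeDist) {s : ℝ} (hs : 0 ≤ s) : 0 ≤ pgfD F s := by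
  apply tsum_nonneg
  intro d
  have h1 : (0:ℝ) ≤ (d:ℝ) := by positivity
  have h2 := F.nonneg d
  positivity

lemma continuousOn_pgfD (F : DegreeDist) :
    ContinuousOn (pgfD F) (Set.Icc (0:ℝ) 1) := by
  rw [continuousOn_iff_continuous_restrict]
  have : (Set.Icc (0:ℝ) 1).domRestrict (pgfD F) =
      fun x : Set.Icc (0:ℝ) 1 => ∑' d : ℕ, (d : ℝ) * F.p d * (x:ℝ) ^ (d-1) := rfl
  rw [this]
  apply continuous_tsum (u := fun d : ℕ => (d:ℝ) * F.p d)
  · intro d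
    continuity
  · exact F.mean_summable
  · intro d x
    rw [Real.norm_eq_abs, abs_mul, abs_mul, abs_pow]
    have hx0 : (0:ℝ) ≤ (x:ℝ) := x.2.1
    have hx1 : (x:ℝ) ≤ 1 := x.2.2
    have h1 : |(x:ℝ)| ^ (d - 1) ≤ 1 := by
      apply pow_le_one₀ (abs_nonneg _)
      rw [abs_of_nonneg hx0]; exact hx1
    calc |(d:ℝ)| * |F.p d| * |(x:ℝ)| ^ (d-1) ≤ |(d:ℝ)| * |F.p d| * 1 := by
          apply mul_le_mul_of_nonneg_left h1 (by positivity)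
      _ = (d:ℝ) * F.p d := by
          rw [mul_one, abs_of_nonneg (by positivity : (0:ℝ) ≤ (d:ℝ)),
            abs_of_nonneg (F.nonneg d)]

end Aux
section Aux2
open Filter

lemma exists_root_le (F : DegreeDist) (μ b : ℝ) (hb : b ∈ Set.Icc (0:ℝ) 1)
    (hfb : pgfD F b ≤ μ * b) : ∃ s ∈ Set.Icc (0:ℝ) b, μ * s = pgfD F s := by
  have hc : ContinuousOn (fun s => pgfD F s - μ * s) (Set.Icc 0 b) := by
    apply ContinuousOn.sub
    · exact (continuousOn_pgfD F).mono (Set.Icc_subset_Icc le_rfl hb.2)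
    · exact (continuous_const.mul continuous_id).continuousOn
  have h0 : (0:ℝ) ≤ pgfD F 0 - μ * 0 := by
    rw [mul_zero, sub_zero]; exact pgfD_nonneg F le_rfl
  have hb0 : pgfD F b - μ * b ≤ 0 := by linarith
  have := intermediate_value_Icc' hb.1 hc
  have h0mem : (0:ℝ) ∈ Set.Icc (pgfD F b - μ * b) (pgfD F 0 - μ * 0) :=
    ⟨hb0, h0⟩
  obtain ⟨s, hs, hs0⟩ := this h0mem
  refine ⟨s, hs, ?_⟩
  have h : pgfD F s - μ * s = 0 := hs0
  linarith

lemma smallestRoot_le (F : DegreeDist) {μ z b : ℝ} (h : IsSmallestRoot F μ z)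
    (hb : b ∈ Set.Icc (0:ℝ) 1) (hfb : pgfD F b ≤ μ * b) : z ≤ b := by
  obtain ⟨s, hs, hroot⟩ := exists_root_le F μ b hb hfb
  exact le_trans (h.2.2 s ⟨hs.1, le_trans hs.2 hb.2⟩ hroot) hs.2

/-- the key tail inequality -/
lemma tail_pow_le (L : ℕ) (d : ℕ) (hd : L + 1 ≤ d) {s : ℝ}
    (hs0 : 0 ≤ s) (hs : s ≤ Real.exp (-(2 / ((L:ℝ) + 1)))) :
    (d : ℝ) * s ^ (d - 1) ≤ ((L:ℝ) + 1) * s ^ L := by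
  have hL1 : (0:ℝ) < (L:ℝ) + 1 := by positivity
  obtain ⟨k, rfl⟩ : ∃ k, d = (L + 1) + k := ⟨d - (L+1), by omega⟩
  set x : ℝ := 2 / ((L:ℝ) + 1) * k with hxdef
  have hx0 : 0 ≤ x := by positivity
  have hsk : s ^ k ≤ Real.exp (-x) := by
    calc s ^ k ≤ (Real.exp (-(2 / ((L:ℝ) + 1)))) ^ k := pow_le_pow_left₀ hs0 hs k
      _ = Real.exp (-x) := by rw [← Real.exp_nat_mul]; congr 1; rw [hxdef]; ring
  have hexp : (L:ℝ) + 1 + k ≤ ((L:ℝ)+1) * Real.exp x := by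
    have h1 : x + 1 ≤ Real.exp x := Real.add_one_le_exp x
    have h2 : ((L:ℝ)+1) * x = 2 * k := by rw [hxdef]; field_simp
    nlinarith [Nat.cast_nonneg (α := ℝ) k,
      mul_le_mul_of_nonneg_left h1 (le_of_lt hL1)]
  have key : ((L:ℝ) + 1 + k) * s ^ k ≤ (L:ℝ) + 1 := by
    have h3 : ((L:ℝ)+1+k) * s ^ k ≤ ((L:ℝ)+1+k) * Real.exp (-x) :=
      mul_le_mul_of_nonneg_left hsk (by positivity)
    have h4 : ((L:ℝ)+1+k) * Real.exp (-x) ≤ ((L:ℝ)+1) * Real.exp x * Real.exp (-x) :=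
      mul_le_mul_of_nonneg_right hexp (le_of_lt (Real.exp_pos _))
    have h5 : ((L:ℝ)+1) * Real.exp x * Real.exp (-x) = (L:ℝ)+1 := by
      rw [mul_assoc, ← Real.exp_add]; simp
    linarith
  have hpow : s ^ (L + 1 + k - 1) = s ^ k * s ^ L := by
    rw [← pow_add]; congr 1; omega
  have hcast : (((L+1+k : ℕ)):ℝ) = (L:ℝ) + 1 + k := by push_cast; ring
  rw [hpow, hcast, ← mul_assoc]
  exact mul_le_mul_of_nonneg_right key (pow_nonneg hs0 L)

end Aux2
section Aux3
open Filter

variable {L : ℕ} {p : ℕ → ℝ}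

lemma range_succ_insert (L : ℕ) : Finset.range (L+1) = insert 0 (Finset.Icc 1 L) := by
  ext d; simp [Nat.lt_succ_iff]; omega

lemma tail_mass_eq (F : DegreeDist) (hF : ∀ d, 1 ≤ d → d ≤ L → F.p d = p d) :
    ∑' x : {x : ℕ // x ∉ Finset.range (L+1)}, F.p x = pGt L p := by
  have h := Summable.sum_add_tsum_subtype_compl F.psummable (Finset.range (L+1))
  rw [F.sum_one] at h
  have hsum : ∑ d ∈ Finset.range (L+1), F.p d = ∑ i ∈ Finset.Icc 1 L, p i := by
    rw [range_succ_insert]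
    rw [Finset.sum_insert (by simp)]
    rw [F.zero, zero_add]
    exact Finset.sum_congr rfl (fun d hd => by
      simp only [Finset.mem_Icc] at hd; exact hF d hd.1 hd.2)
  rw [hsum] at h
  unfold pGt
  linarith

lemma pgfD_le_of_memF (F : DegreeDist) (hF : ∀ d, 1 ≤ d → d ≤ L → F.p d = p d)
    {s : ℝ} (hs0 : 0 ≤ s) (hs : s ≤ Real.exp (-(2 / ((L:ℝ) + 1)))) :
    pgfD F s ≤ (∑ d ∈ Finset.Icc 1 L, (d:ℝ) * p d * s^(d-1))
      + ((L:ℝ)+1) * s^L * pGt L p := by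
  have hs1 : |s| ≤ 1 := by
    rw [abs_of_nonneg hs0]
    exact le_trans hs (Real.exp_le_one_iff.mpr (neg_nonpos.mpr (by positivity)))
  have hsummable := summable_pgfD F hs1
  unfold pgfD
  rw [← Summable.sum_add_tsum_subtype_compl hsummable (Finset.range (L+1))]
  have hhead : ∑ d ∈ Finset.range (L+1), (d:ℝ) * F.p d * s^(d-1)
      = ∑ d ∈ Finset.Icc 1 L, (d:ℝ) * p d * s^(d-1) := by
    rw [range_succ_insert, Finset.sum_insert (by simp)]
    simp only [Nat.cast_zero, zero_mul]
    rw [zero_add]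
    exact Finset.sum_congr rfl (fun d hd => by
      simp only [Finset.mem_Icc] at hd; rw [hF d hd.1 hd.2])
  rw [hhead]
  apply add_le_add_right
  have hle : ∑' x : {x : ℕ // x ∉ Finset.range (L+1)},
      ((x:ℕ):ℝ) * F.p x * s^((x:ℕ)-1)
      ≤ ∑' x : {x : ℕ // x ∉ Finset.range (L+1)},
      (((L:ℝ)+1) * s^L) * F.p x := by
    apply Summable.tsum_le_tsum
    · rintro ⟨x, hx⟩
      simp only [Finset.mem_range, not_lt] at hx
      have hx' : L + 1 ≤ x := hx
      have := tail_pow_le L x hx' hs0 hs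
      have hnn := F.nonneg x
      calc ((x:ℕ):ℝ) * F.p x * s^((x:ℕ)-1) = F.p x * (((x:ℕ):ℝ) * s^((x:ℕ)-1)) := by ring
        _ ≤ F.p x * (((L:ℝ)+1) * s^L) := mul_le_mul_of_nonneg_left this hnn
        _ = (((L:ℝ)+1) * s^L) * F.p x := by ring
    · exact hsummable.subtype _
    · exact (F.psummable.mul_left _).subtype _
  refine le_trans hle ?_
  rw [tsum_mul_left, tail_mass_eq F hF]

lemma pgf_le_of_memF (F : DegreeDist) (hF : ∀ d, 1 ≤ d → d ≤ L → F.p d = p d)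
    {s : ℝ} (hs0 : 0 ≤ s) (hs : s ≤ 1) :
    pgf F s ≤ (∑ d ∈ Finset.Icc 1 L, p d * s^d) + pGt L p * s^(L+1) := by
  have hs1 : |s| ≤ 1 := by rwa [abs_of_nonneg hs0]
  have hsummable := summable_pgf F hs1
  unfold pgf
  rw [← Summable.sum_add_tsum_subtype_compl hsummable (Finset.range (L+1))]
  have hhead : ∑ d ∈ Finset.range (L+1), F.p d * s^d
      = ∑ d ∈ Finset.Icc 1 L, p d * s^d := by
    rw [range_succ_insert, Finset.sum_insert (by simp)]
    rw [F.zero, zero_mul, zero_add]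
    exact Finset.sum_congr rfl (fun d hd => by
      simp only [Finset.mem_Icc] at hd; rw [hF d hd.1 hd.2])
  rw [hhead]
  apply add_le_add_right
  have hle : ∑' x : {x : ℕ // x ∉ Finset.range (L+1)}, F.p x * s^(x:ℕ)
      ≤ ∑' x : {x : ℕ // x ∉ Finset.range (L+1)}, s^(L+1) * F.p x := by
    apply Summable.tsum_le_tsum
    · rintro ⟨x, hx⟩
      simp only [Finset.mem_range, not_lt] at hx
      have hx' : L + 1 ≤ x := hx
      have hpow : s^(x:ℕ) ≤ s^(L+1) := pow_le_pow_of_le_one hs0 hs hx'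
      calc F.p x * s^(x:ℕ) ≤ F.p x * s^(L+1) :=
            mul_le_mul_of_nonneg_left hpow (F.nonneg x)
        _ = s^(L+1) * F.p x := by ring
    · exact hsummable.subtype _
    · exact (F.psummable.mul_left _).subtype _
  refine le_trans hle ?_
  rw [tsum_mul_left, tail_mass_eq F hF, mul_comm]

end Aux3
section Aux4
open Filter

variable {L : ℕ} {p : ℕ → ℝ} {μ : ℝ}

lemma tsum_G_gen {G : DegreeDist} (hG : IsG L p G) (f : ℕ → ℝ) :
    ∑' d : ℕ, G.p d * f d = (∑ d ∈ Finset.Icc 1 L, p d * f d) + pGt L p * f (L+1) := by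
  rw [tsum_eq_sum (s := Finset.Icc 1 (L+1))
    (by
      intro b hb
      simp only [Finset.mem_Icc, not_and, not_le] at hb
      rcases Nat.eq_zero_or_pos b with h | h
      · subst h; rw [G.zero, zero_mul]
      · rw [hG.2.2 b (hb h), zero_mul])]
  rw [Finset.sum_Icc_succ_top (by omega : 1 ≤ L + 1), hG.2.1]
  congr 1
  apply Finset.sum_congr rfl
  intro d hd
  simp only [Finset.mem_Icc] at hd
  rw [hG.1 d hd.1 hd.2]

lemma tsum_Gm_gen {m : ℕ} {Gm : DegreeDist} (hGm : IsGm L p μ m Gm) (hm : L + 2 ≤ m)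
    (f : ℕ → ℝ) :
    ∑' d : ℕ, Gm.p d * f d = (∑ d ∈ Finset.Icc 1 L, p d * f d)
      + (1 - rmass L (kappa L p μ) m) * pGt L p * f (L+1)
      + rmass L (kappa L p μ) m * pGt L p * f m := by
  have hmni : m ∉ Finset.Icc 1 (L+1) := by simp [Finset.mem_Icc]; omega
  rw [tsum_eq_sum (s := insert m (Finset.Icc 1 (L+1)))
    (by
      intro b hb
      simp only [Finset.mem_insert, Finset.mem_Icc, not_or, not_and, not_le] at hb
      rcases Nat.eq_zero_or_pos b with h | h
      · subst h; rw [Gm.zero, zero_mul]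
      · rw [hGm.2.2.2 b (hb.2 h) hb.1, zero_mul])]
  rw [Finset.sum_insert hmni, hGm.2.2.1]
  rw [Finset.sum_Icc_succ_top (by omega : 1 ≤ L + 1), hGm.2.1]
  have hc : ∑ d ∈ Finset.Icc 1 L, Gm.p d * f d = ∑ d ∈ Finset.Icc 1 L, p d * f d := by
    apply Finset.sum_congr rfl
    intro d hd
    simp only [Finset.mem_Icc] at hd
    rw [hGm.1 d hd.1 hd.2]
  rw [hc]; ring

lemma pgfD_G_eq {G : DegreeDist} (hG : IsG L p G) (s : ℝ) :
    pgfD G s = (∑ d ∈ Finset.Icc 1 L, (d:ℝ) * p d * s^(d-1))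
      + ((L:ℝ)+1) * pGt L p * s^L := by
  unfold pgfD
  rw [tsum_congr (fun d => by ring :
    ∀ d : ℕ, (d:ℝ) * G.p d * s^(d-1) = G.p d * ((d:ℝ) * s^(d-1)))]
  rw [tsum_G_gen hG (fun d => (d:ℝ) * s^(d-1))]
  simp only [Nat.add_sub_cancel, Nat.cast_add, Nat.cast_one]
  congr 1
  · apply Finset.sum_congr rfl; intro d _; ring
  · ring

lemma pgf_G_eq {G : DegreeDist} (hG : IsG L p G) (s : ℝ) :
    pgf G s = (∑ d ∈ Finset.Icc 1 L, p d * s^d) + pGt L p * s^(L+1) := by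
  unfold pgf
  rw [tsum_G_gen hG (fun d => s^d)]

lemma mu_G_eq {G : DegreeDist} (hG : IsG L p G) :
    mu G = (∑ d ∈ Finset.Icc 1 L, (d:ℝ) * p d) + ((L:ℝ)+1) * pGt L p := by
  unfold mu
  rw [tsum_congr (fun d => by ring :
    ∀ d : ℕ, (d:ℝ) * G.p d = G.p d * (d:ℝ))]
  rw [tsum_G_gen hG (fun d => (d:ℝ))]
  simp only [Nat.cast_add, Nat.cast_one]
  congr 1
  · apply Finset.sum_congr rfl; intro d _; ring
  · ring

lemma pgfD_Gm_eq {m : ℕ} {Gm : DegreeDist} (hGm : IsGm L p μ m Gm) (hm : L + 2 ≤ m) (s : ℝ) :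
    pgfD Gm s = (∑ d ∈ Finset.Icc 1 L, (d:ℝ) * p d * s^(d-1))
      + ((L:ℝ)+1) * ((1 - rmass L (kappa L p μ) m) * pGt L p) * s^L
      + (m:ℝ) * (rmass L (kappa L p μ) m * pGt L p) * s^(m-1) := by
  unfold pgfD
  rw [tsum_congr (fun d => by ring :
    ∀ d : ℕ, (d:ℝ) * Gm.p d * s^(d-1) = Gm.p d * ((d:ℝ) * s^(d-1)))]
  rw [tsum_Gm_gen hGm hm (fun d => (d:ℝ) * s^(d-1))]
  simp only [Nat.add_sub_cancel, Nat.cast_add, Nat.cast_one]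
  congr 1
  congr 1
  · apply Finset.sum_congr rfl; intro d _; ring
  · ring
  · ring

lemma pgf_Gm_eq {m : ℕ} {Gm : DegreeDist} (hGm : IsGm L p μ m Gm) (hm : L + 2 ≤ m) (s : ℝ) :
    pgf Gm s = (∑ d ∈ Finset.Icc 1 L, p d * s^d)
      + (1 - rmass L (kappa L p μ) m) * pGt L p * s^(L+1)
      + rmass L (kappa L p μ) m * pGt L p * s^m := by
  unfold pgf
  rw [tsum_Gm_gen hGm hm (fun d => s^d)]

lemma mu_Gm_eq {m : ℕ} {Gm : DegreeDist} (hGm : IsGm L p μ m Gm) (hm : L + 2 ≤ m)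
    (hpGt : pGt L p ≠ 0) (hmne : (m:ℝ) ≠ (L:ℝ) + 1) :
    mu Gm = μ := by
  unfold mu
  rw [tsum_congr (fun d => by ring :
    ∀ d : ℕ, (d:ℝ) * Gm.p d = Gm.p d * (d:ℝ))]
  rw [tsum_Gm_gen hGm hm (fun d => (d:ℝ))]
  have hsum : ∑ d ∈ Finset.Icc 1 L, p d * (d:ℝ) = ∑ d ∈ Finset.Icc 1 L, (d:ℝ) * p d := by
    apply Finset.sum_congr rfl; intro d _; ring
  rw [hsum]
  have hr : (1 - rmass L (kappa L p μ) m) * pGt L p * ((L:ℝ)+1)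
      + rmass L (kappa L p μ) m * pGt L p * (m:ℝ)
      = kappa L p μ * pGt L p := by
    unfold rmass
    have h1 : (m:ℝ) - ((L:ℝ)+1) ≠ 0 := by
      intro h; apply hmne; linarith
    field_simp
    ring
  simp only [Nat.cast_add, Nat.cast_one] at hr ⊢
  rw [add_assoc]
  rw [show (1 - rmass L (kappa L p μ) m) * pGt L p * ((L:ℝ)+1)
      + rmass L (kappa L p μ) m * pGt L p * (m:ℝ) = kappa L p μ * pGt L p from hr]
  unfold kappa
  field_simp
  ring

end Aux4
section Aux5
open Filter

variable {L : ℕ} {p : ℕ → ℝ} {μ : ℝ}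

lemma pgfD_Gm_ge {m : ℕ} {Gmm G : DegreeDist} (hGm : IsGm L p μ m Gmm)
    (hG : IsG L p G) (hm : L + 2 ≤ m)
    (hpGt : 0 ≤ pGt L p) (hr : 0 ≤ rmass L (kappa L p μ) m)
    {s : ℝ} (hs0 : 0 ≤ s) (hs1 : s ≤ 1) :
    pgfD G s - rmass L (kappa L p μ) m * (((L:ℝ)+1) * pGt L p) ≤ pgfD Gmm s := by
  rw [pgfD_Gm_eq hGm hm, pgfD_G_eq hG]
  set r := rmass L (kappa L p μ) m with hrdef
  have h1 : 0 ≤ (m:ℝ) * (r * pGt L p) * s^(m-1) := by positivity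
  have h2 : s^L ≤ 1 := pow_le_one₀ hs0 hs1
  have h3 : 0 ≤ s^L := pow_nonneg hs0 L
  have hL0 : (0:ℝ) ≤ (L:ℝ) + 1 := by positivity
  nlinarith [mul_nonneg (mul_nonneg (mul_nonneg hr hL0) hpGt) (sub_nonneg.mpr h2)]

lemma pgf_G_mono {G : DegreeDist} (hG : IsG L p G) (hp : ∀ i, 0 ≤ p i)
    (hpGt : 0 ≤ pGt L p) {a b : ℝ} (ha : 0 ≤ a) (hab : a ≤ b) :
    pgf G a ≤ pgf G b := by
  rw [pgf_G_eq hG, pgf_G_eq hG]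
  apply add_le_add
  · apply Finset.sum_le_sum
    intro d _
    exact mul_le_mul_of_nonneg_left (pow_le_pow_left₀ ha hab d) (hp d)
  · exact mul_le_mul_of_nonneg_left (pow_le_pow_left₀ ha hab _) hpGt

end Aux5

/-- STATEMENT 6: If `κ > L+1` and `z̃_G ≤ e^{-2/(L+1)}`, then `g_{G_m}(z̃_m) → g_G(z̃_G^{(μ)})`
and the infimum of `ξ_F` over `F ∈ F(μ, p_L)` equals `1 - g_G(z̃_G^{(μ)})`. -/theorem tail_does_not_determine_giant_stmt6
    (L : ℕ) (hL : 1 ≤ L) (p : ℕ → ℝ)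
    (hp : ∀ i, 0 ≤ p i) (hplt : ∑ i ∈ Finset.Icc 1 L, p i < 1)
    (μ : ℝ) (hμ : 0 < μ) (hκ : (L : ℝ) + 1 < kappa L p μ)
    (G : DegreeDist) (hG : IsG L p G)
    (zG : ℝ) (hzG : IsSmallestRoot G (mu G) zG)
    (hcond : zG ≤ Real.exp (-(2 / ((L : ℝ) + 1))))
    (zGmu : ℝ) (hzGmu : IsSmallestRoot G μ zGmu)
    (Gm : ℕ → DegreeDist)
    (hGm : ∀ m : ℕ, kappa L p μ < (m : ℝ) → IsGm L p μ m (Gm m))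
    (zm : ℕ → ℝ)
    (hzm : ∀ m : ℕ, kappa L p μ < (m : ℝ) → IsSmallestRoot (Gm m) μ (zm m)) :
    Filter.Tendsto (fun m => pgf (Gm m) (zm m)) Filter.atTop (nhds (pgf G zGmu)) ∧
    sInf {x : ℝ | ∃ F : DegreeDist, MemF L p F ∧ mu F = μ ∧
        ∃ zF, IsSmallestRoot F (mu F) zF ∧ x = 1 - pgf F zF} =
      1 - pgf G zGmu := by
  classical
  have hpGt : 0 < pGt L p := by unfold pGt; linarith
  have hmuG : mu G < μ := by
    rw [mu_G_eq hG]
    have h1 : ((L:ℝ)+1) * pGt L p < μ - ∑ d ∈ Finset.Icc 1 L, (d:ℝ) * p d :=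
      (lt_div_iff₀ hpGt).mp hκ
    linarith
  have hzG0 : 0 ≤ zG := hzG.1.1
  have hzGmu0 : 0 ≤ zGmu := hzGmu.1.1
  have hzGmu1 : zGmu ≤ 1 := hzGmu.1.2
  have hzGmuzG : zGmu ≤ zG := by
    apply smallestRoot_le G hzGmu hzG.1
    rw [← hzG.2.1]
    exact mul_le_mul_of_nonneg_right (le_of_lt hmuG) hzG0
  have hzGmuc : zGmu ≤ Real.exp (-(2 / ((L : ℝ) + 1))) := le_trans hzGmuzG hcond
  have hDle : ∀ (F : DegreeDist), (∀ d, 1 ≤ d → d ≤ L → F.p d = p d) →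
      pgfD F zGmu ≤ pgfD G zGmu := by
    intro F hF
    have h1 := pgfD_le_of_memF F hF hzGmu0 hzGmuc
    rw [pgfD_G_eq hG]
    calc pgfD F zGmu ≤ _ := h1
      _ = _ := by ring
  have hroot_le : ∀ (F : DegreeDist) (zF : ℝ), (∀ d, 1 ≤ d → d ≤ L → F.p d = p d) →
      IsSmallestRoot F μ zF → zF ≤ zGmu := by
    intro F zF hF hzF
    apply smallestRoot_le F hzF hzGmu.1
    calc pgfD F zGmu ≤ pgfD G zGmu := hDle F hF
      _ = μ * zGmu := hzGmu.2.1.symm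
  have hPartA : ∀ (F : DegreeDist) (zF : ℝ), MemF L p F →
      IsSmallestRoot F μ zF → pgf F zF ≤ pgf G zGmu := by
    intro F zF hF hzF
    have hzF0 : 0 ≤ zF := hzF.1.1
    have hzF1 : zF ≤ 1 := hzF.1.2
    have h1 : pgf F zF ≤ pgf G zF := by
      rw [pgf_G_eq hG]
      exact pgf_le_of_memF F hF hzF0 hzF1
    have h2 : pgf G zF ≤ pgf G zGmu :=
      pgf_G_mono hG hp (le_of_lt hpGt) hzF0 (hroot_le F zF hF hzF)
    linarith
  -- index bookkeeping
  set κ := kappa L p μ with hκdef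
  have hκpos : (0:ℝ) < κ := lt_trans (by positivity) hκ
  have hLm : ∀ m : ℕ, κ < (m:ℝ) → L + 2 ≤ m := by
    intro m hm
    have h1 : (L:ℝ) + 1 < (m:ℝ) := lt_trans hκ hm
    have h2 : ((L+1 : ℕ):ℝ) < ((m:ℕ):ℝ) := by push_cast; linarith
    have h3 := Nat.cast_lt.mp h2
    omega
  set M0 : ℕ := ⌈κ⌉₊ + 1 with hM0
  have hM : ∀ m : ℕ, M0 ≤ m → κ < (m:ℝ) := by
    intro m hm
    have h1 : κ ≤ (⌈κ⌉₊ : ℝ) := Nat.le_ceil κ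
    have h2 : ((⌈κ⌉₊ : ℕ) : ℝ) < ((m:ℕ):ℝ) := by
      have : ⌈κ⌉₊ < m := by omega
      exact_mod_cast this
    linarith
  have hr0 : ∀ m : ℕ, κ < (m:ℝ) → 0 ≤ rmass L κ m := by
    intro m hm
    have h1 : (L:ℝ) + 1 < (m:ℝ) := lt_trans hκ hm
    apply div_nonneg <;> linarith
  have hrtend : Filter.Tendsto (fun m : ℕ => rmass L κ m) Filter.atTop (nhds 0) := by
    unfold rmass
    apply Filter.Tendsto.div_atTop tendsto_const_nhds
    have h1 : Filter.Tendsto (fun m : ℕ => (m:ℝ)) Filter.atTop Filter.atTop :=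
      tendsto_natCast_atTop_atTop
    have h2 : Filter.Tendsto (fun m : ℕ => (m:ℝ) + -(((L:ℝ)) + 1)) Filter.atTop Filter.atTop :=
      Filter.tendsto_atTop_add_const_right _ _ h1
    simpa [sub_eq_add_neg] using h2
  have hzm_mem : ∀ m : ℕ, κ < (m:ℝ) → zm m ∈ Set.Icc (0:ℝ) 1 := fun m hm => (hzm m hm).1
  have hzm_le : ∀ m : ℕ, κ < (m:ℝ) → zm m ≤ zGmu := fun m hm =>
    hroot_le (Gm m) (zm m) (hGm m hm).1 (hzm m hm)
  -- convergence of the roots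
  have hzmtend : Filter.Tendsto zm Filter.atTop (nhds zGmu) := by
    rw [Metric.tendsto_atTop]
    intro ε hε
    have hlow : ∃ N : ℕ, ∀ m ≥ N, zGmu - ε < zm m ∧ κ < (m:ℝ) := by
      by_cases hcase : zGmu - ε < 0
      · exact ⟨M0, fun m hm => ⟨lt_of_lt_of_le hcase (hzm_mem m (hM m hm)).1, hM m hm⟩⟩
      · push_neg at hcase
        have hKsub : Set.Icc (0:ℝ) (zGmu - ε) ⊆ Set.Icc (0:ℝ) 1 :=
          Set.Icc_subset_Icc le_rfl (by linarith)
        have hfc : ContinuousOn (fun s => pgfD G s - μ * s) (Set.Icc (0:ℝ) (zGmu - ε)) := by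
          apply ContinuousOn.sub ((continuousOn_pgfD G).mono hKsub)
          exact (continuous_const.mul continuous_id).continuousOn
        have hpos : ∀ s ∈ Set.Icc (0:ℝ) (zGmu - ε), 0 < pgfD G s - μ * s := by
          intro s hs
          by_contra hcon
          push_neg at hcon
          obtain ⟨s₀, hs₀, hroot⟩ := exists_root_le G μ s
            ⟨hs.1, by have := hs.2; linarith⟩ (by linarith)
          have h4 := hzGmu.2.2 s₀ ⟨hs₀.1, by have h5 := hs.2; linarith [hs₀.2]⟩ hroot
          have h6 : zGmu ≤ zGmu - ε := le_trans h4 (le_trans hs₀.2 hs.2)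
          linarith
        obtain ⟨s₀, hs₀K, hs₀min⟩ := isCompact_Icc.exists_isMinOn
          (Set.nonempty_Icc.mpr hcase) hfc
        have hδpos : 0 < pgfD G s₀ - μ * s₀ := hpos s₀ hs₀K
        have hev : ∀ᶠ m : ℕ in Filter.atTop,
            rmass L κ m * (((L:ℝ)+1) * pGt L p) < pgfD G s₀ - μ * s₀ := by
          have h7 := hrtend.mul_const (((L:ℝ)+1) * pGt L p)
          rw [zero_mul] at h7
          exact h7.eventually_lt_const hδpos
        obtain ⟨N1, hN1⟩ := Filter.eventually_atTop.mp hev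
        refine ⟨max N1 M0, fun m hm => ?_⟩
        have hmκ : κ < (m:ℝ) := hM m (le_trans (le_max_right _ _) hm)
        refine ⟨?_, hmκ⟩
        by_contra hcon
        push_neg at hcon
        have hzmK : zm m ∈ Set.Icc (0:ℝ) (zGmu - ε) := ⟨(hzm_mem m hmκ).1, hcon⟩
        have hge := pgfD_Gm_ge (hGm m hmκ) hG (hLm m hmκ) (le_of_lt hpGt)
          (hr0 m hmκ) (hzm_mem m hmκ).1 (hzm_mem m hmκ).2
        have hroot : μ * zm m = pgfD (Gm m) (zm m) := (hzm m hmκ).2.1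
        have hminz : pgfD G s₀ - μ * s₀ ≤ pgfD G (zm m) - μ * zm m :=
          isMinOn_iff.mp hs₀min (zm m) hzmK
        have hN1' := hN1 m (le_trans (le_max_left _ _) hm)
        linarith
    obtain ⟨N, hN⟩ := hlow
    refine ⟨max N M0, fun m hm => ?_⟩
    have h1 := hN m (le_trans (le_max_left _ _) hm)
    have h2 := hzm_le m (hM m (le_trans (le_max_right _ _) hm))
    rw [Real.dist_eq, abs_of_nonpos (by linarith)]
    linarith [h1.1]
  -- convergence of pgf G (zm m)
  have hcontG : Continuous (fun s : ℝ =>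
      (∑ d ∈ Finset.Icc 1 L, p d * s^d) + pGt L p * s^(L+1)) := by
    apply Continuous.add
    · apply continuous_finset_sum
      intro d _
      exact continuous_const.mul (continuous_pow d)
    · exact continuous_const.mul (continuous_pow (L+1))
  have h1 : Filter.Tendsto (fun m => pgf G (zm m)) Filter.atTop (nhds (pgf G zGmu)) := by
    have h2 := (hcontG.tendsto zGmu).comp hzmtend
    have h3 : (fun m => pgf G (zm m)) = fun m =>
        (∑ d ∈ Finset.Icc 1 L, p d * (zm m)^d) + pGt L p * (zm m)^(L+1) := by
      funext m; exact pgf_G_eq hG (zm m)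
    rw [h3, pgf_G_eq hG zGmu]
    exact h2
  -- error term tends to zero
  have hterm : Filter.Tendsto
      (fun m : ℕ => rmass L κ m * pGt L p * ((zm m)^m - (zm m)^(L+1)))
      Filter.atTop (nhds 0) := by
    apply squeeze_zero_norm' (a := fun m : ℕ => rmass L κ m * pGt L p * 2)
    · filter_upwards [Filter.eventually_ge_atTop M0] with m hm
      have hmκ := hM m hm
      have hz0 := (hzm_mem m hmκ).1
      have hz1 := (hzm_mem m hmκ).2
      have hb1 : |(zm m)^m - (zm m)^(L+1)| ≤ 2 := by
        have p1 : 0 ≤ (zm m)^m := pow_nonneg hz0 m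
        have p2 : (zm m)^m ≤ 1 := pow_le_one₀ hz0 hz1
        have p3 : 0 ≤ (zm m)^(L+1) := pow_nonneg hz0 _
        have p4 : (zm m)^(L+1) ≤ 1 := pow_le_one₀ hz0 hz1
        rw [abs_le]; constructor <;> linarith
      have hrp : 0 ≤ rmass L κ m * pGt L p := mul_nonneg (hr0 m hmκ) (le_of_lt hpGt)
      rw [Real.norm_eq_abs, abs_mul, abs_of_nonneg hrp]
      exact mul_le_mul_of_nonneg_left hb1 hrp
    · have h4 := (hrtend.mul_const (pGt L p)).mul_const (2:ℝ)
      simpa using h4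
  have hmain1 : Filter.Tendsto (fun m => pgf (Gm m) (zm m)) Filter.atTop
      (nhds (pgf G zGmu)) := by
    have hsum := h1.add hterm
    rw [add_zero] at hsum
    apply Filter.Tendsto.congr' _ hsum
    filter_upwards [Filter.eventually_ge_atTop M0] with m hm
    have hmκ := hM m hm
    rw [pgf_Gm_eq (hGm m hmκ) (hLm m hmκ), pgf_G_eq hG]
    ring
  refine ⟨hmain1, ?_⟩
  -- the infimum
  have hlb : ∀ x ∈ {x : ℝ | ∃ F : DegreeDist, MemF L p F ∧ mu F = μ ∧
      ∃ zF, IsSmallestRoot F (mu F) zF ∧ x = 1 - pgf F zF}, 1 - pgf G zGmu ≤ x := by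
    rintro x ⟨F, hF, hmuF, zF, hzF, rfl⟩
    have hzF' : IsSmallestRoot F μ zF := by rw [← hmuF]; exact hzF
    have := hPartA F zF hF hzF'
    linarith
  have hmem : ∀ m : ℕ, κ < (m:ℝ) → (1 - pgf (Gm m) (zm m)) ∈
      {x : ℝ | ∃ F : DegreeDist, MemF L p F ∧ mu F = μ ∧
      ∃ zF, IsSmallestRoot F (mu F) zF ∧ x = 1 - pgf F zF} := by
    intro m hmκ
    have hmL : (L:ℝ)+1 < (m:ℝ) := lt_trans hκ hmκ
    have hmuGm : mu (Gm m) = μ :=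
      mu_Gm_eq (hGm m hmκ) (hLm m hmκ) (ne_of_gt hpGt) (by linarith)
    exact ⟨Gm m, (hGm m hmκ).1, hmuGm, zm m, by rw [hmuGm]; exact hzm m hmκ, rfl⟩
  have hne : Set.Nonempty {x : ℝ | ∃ F : DegreeDist, MemF L p F ∧ mu F = μ ∧
      ∃ zF, IsSmallestRoot F (mu F) zF ∧ x = 1 - pgf F zF} :=
    ⟨_, hmem M0 (hM M0 le_rfl)⟩
  have hbdd : BddBelow {x : ℝ | ∃ F : DegreeDist, MemF L p F ∧ mu F = μ ∧
      ∃ zF, IsSmallestRoot F (mu F) zF ∧ x = 1 - pgf F zF} :=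
    ⟨1 - pgf G zGmu, hlb⟩
  apply le_antisymm
  · have htd : Filter.Tendsto (fun m => 1 - pgf (Gm m) (zm m)) Filter.atTop
        (nhds (1 - pgf G zGmu)) := tendsto_const_nhds.sub hmain1
    apply ge_of_tendsto htd
    filter_upwards [Filter.eventually_ge_atTop M0] with m hm
    exact csInf_le hbdd (hmem m (hM m hm))
  · exact le_csInf hne hlb
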